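/- Let S be an action-based randomization mechanism, U an uncertainty measure, p a prior distribution on the secret set X, and σ a finite strategy. Then the information leakage is nonnegative, I_σ(S,p) ≥ 0; moreover, if the secret X and the observation sequence Y are independent under the joint distribution p_σ, then I_σ(S,p) = 0. -/

import Mathlib

open scoped BigOperators Classical

noncomputable section

variable {X Y A : Type*}

/-- Conditional product of transition probabilities along `ys`, where the action at each
step is chosen by the strategy `σ` applied to the accumulated prefix `pre`
(`0` if the strategy is undefined on some prefix). -/
def likAux (M : A → X → Y → ℝ) (σ : List Y → Option A) (x : X) : List Y → List Y → ℝ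
  | _, [] => 1
  | pre, y :: ys => ((σ pre).elim 0 fun a => M a x y) * likAux M σ x (pre ++ [y]) ys

/-- `p_σ(ys | x)`: the probability of the (maximal) observation sequence `ys`
given the secret `x`, under the finite strategy `σ`. A sequence is maximal when its
last proper prefix is in the domain of `σ` but the sequence itself is not. -/
def condDist (M : A → X → Y → ℝ) (σ : List Y → Option A) (x : X) (ys : List Y) : ℝ :=
  if ys ≠ [] ∧ (σ ys.dropLast).isSome ∧ σ ys = none then likAux M σ x [] ys else 0

/-- joint distribution `p_σ(x, ys)` induced by the prior `p` and the strategy `σ`. -/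
def joint (M : A → X → Y → ℝ) (σ : List Y → Option A) (p : X → ℝ) (x : X) (ys : List Y) : ℝ :=
  p x * condDist M σ x ys

/-- marginal `p_σ(ys)` on observation sequences. -/
def obsProb [Fintype X] (M : A → X → Y → ℝ) (σ : List Y → Option A) (p : X → ℝ)
    (ys : List Y) : ℝ :=
  ∑ x : X, joint M σ p x ys

/-- posterior `p_σ(·|ys)` on secrets. -/
def post [Fintype X] (M : A → X → Y → ℝ) (σ : List Y → Option A) (p : X → ℝ)
    (ys : List Y) : X → ℝ :=
  fun x => joint M σ p x ys / obsProb M σ p ys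

/-- conditional uncertainty `U_σ(X|Y) = Σ_{ys : p_σ(ys)>0} p_σ(ys)·U(p_σ(·|ys))`
(terms with `p_σ(ys) = 0` contribute `0`). -/
def condUncert [Fintype X] (U : (X → ℝ) → ℝ) (M : A → X → Y → ℝ) (σ : List Y → Option A)
    (p : X → ℝ) : ℝ :=
  ∑' ys : List Y, obsProb M σ p ys * U (post M σ p ys)

/-- information leakage `I_σ(S,p) = U(p) − U_σ(X|Y)`. -/
def leak [Fintype X] (U : (X → ℝ) → ℝ) (M : A → X → Y → ℝ) (σ : List Y → Option A)
    (p : X → ℝ) : ℝ :=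
  U p - condUncert U M σ p

/-- the domain of a strategy is prefix-closed. -/
def PrefixClosed (σ : List Y → Option A) : Prop :=
  ∀ l l' : List Y, l <+: l' → (σ l').isSome → (σ l).isSome

/-- a finite strategy: nonempty prefix-closed finite domain. -/
def FiniteStrategy (σ : List Y → Option A) : Prop :=
  (σ []).isSome ∧ PrefixClosed σ ∧ {l : List Y | (σ l).isSome}.Finite

/-- the strategy has length exactly `n` (one plus the maximal length of a sequence
in its domain). -/
def HasLength (σ : List Y → Option A) (n : ℕ) : Prop :=
  (∀ ys, (σ ys).isSome → ys.length + 1 ≤ n) ∧ ∃ ys, (σ ys).isSome ∧ ys.length + 1 = n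

/-- the set of actions occurring in a strategy. -/
def rangeActs (σ : List Y → Option A) : Set A :=
  {a | ∃ ys, σ ys = some a}

/-- the non-adaptive (complete) strategy playing the listed actions in order:
the action played only depends on the number of past observations. -/
def ofList (as : List A) : List Y → Option A := fun ys => as[ys.length]?

/-- an action-based randomization mechanism: each row of each matrix `M_a` is a
probability distribution on observations. -/
def IsMechanism [Fintype Y] (M : A → X → Y → ℝ) : Prop :=
  ∀ a x, M a x ∈ stdSimplex ℝ Y

/-- an uncertainty measure: concave and continuous on the probability simplex. -/
def IsUncertainty [Fintype X] (U : (X → ℝ) → ℝ) : Prop :=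
  ConcaveOn ℝ (stdSimplex ℝ X) U ∧ ContinuousOn U (stdSimplex ℝ X)

/-- `X`-marginal of the joint distribution `p_σ`. -/
def margX (M : A → X → Y → ℝ) (σ : List Y → Option A) (p : X → ℝ) (x : X) : ℝ :=
  ∑' ys : List Y, joint M σ p x ys


lemma likAux_nonneg (M : A → X → Y → ℝ) (σ : List Y → Option A)
    (hM : ∀ a x y, 0 ≤ M a x y) (x : X) :
    ∀ (l pre : List Y), 0 ≤ likAux M σ x pre l := by
  intro l
  induction l with
  | nil => intro pre; simp [likAux]
  | cons y t ih =>
    intro pre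
    refine mul_nonneg ?_ (ih _)
    cases h : σ pre with
    | none => simp
    | some a => simpa using hM a x y

lemma likAux_append (M : A → X → Y → ℝ) (σ : List Y → Option A) (x : X) :
    ∀ (l l' pre : List Y),
      likAux M σ x pre (l ++ l') = likAux M σ x pre l * likAux M σ x (pre ++ l) l' := by
  intro l
  induction l with
  | nil => intro l' pre; simp [likAux]
  | cons y t ih =>
    intro l' pre
    simp only [List.cons_append, likAux]
    rw [ih l' (pre ++ [y]),
      show pre ++ [y] ++ t = pre ++ y :: t by simp, mul_assoc]

lemma likAux_singleton (M : A → X → Y → ℝ) (σ : List Y → Option A) (x : X)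
    (pre : List Y) (y : Y) :
    likAux M σ x pre [y] = (σ pre).elim 0 fun a => M a x y := by
  simp [likAux]

/-- Lemma 2.5: for any mechanism, uncertainty measure, prior and finite
strategy, the leakage is nonnegative; moreover it is `0` whenever the secret and the
observation sequence are independent under the joint distribution `p_σ`. -/
theorem leak_nonneg_and_eq_zero_of_indep
    [Fintype X] [Fintype Y] [Fintype A] [Nonempty X] [Nonempty Y] [Nonempty A]
    (M : A → X → Y → ℝ) (hM : IsMechanism M)
    (U : (X → ℝ) → ℝ) (hU : IsUncertainty U)
    (p : X → ℝ) (hp : p ∈ stdSimplex ℝ X)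
    (σ : List Y → Option A) (hσ : FiniteStrategy σ) :
    0 ≤ leak U M σ p ∧
      ((∀ x ys, joint M σ p x ys = margX M σ p x * obsProb M σ p ys) →
        leak U M σ p = 0) := by
  classical
  obtain ⟨hroot, hpc, hfin⟩ := hσ
  have hMnn : ∀ a x y, 0 ≤ M a x y := fun a x y => (hM a x).1 y
  set Dfin : Finset (List Y) := hfin.toFinset with hDdef
  have hDmem : ∀ l, l ∈ Dfin ↔ (σ l).isSome := fun l => hfin.mem_toFinset
  set E : Finset (List Y) :=
    (Dfin ×ˢ (Finset.univ : Finset Y)).image (fun q => q.1 ++ [q.2]) with hEdef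
  -- membership in E
  have hEmem : ∀ l, l ∈ E ↔ l ≠ [] ∧ (σ l.dropLast).isSome := by
    intro l
    constructor
    · intro hl
      obtain ⟨⟨t, y⟩, hq, rfl⟩ := Finset.mem_image.1 hl
      have ht : t ∈ Dfin := (Finset.mem_product.1 hq).1
      refine ⟨by simp, ?_⟩
      rw [List.dropLast_concat]
      exact (hDmem t).1 ht
    · rintro ⟨hne, hd⟩
      refine Finset.mem_image.2 ⟨(l.dropLast, l.getLast hne), ?_, ?_⟩
      · exact Finset.mem_product.2 ⟨(hDmem _).2 hd, Finset.mem_univ _⟩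
      · exact List.dropLast_append_getLast hne
  -- telescoping: sum of likelihoods over E equals sum over Dfin
  have hsum_lik : ∀ x, ∑ l ∈ E, likAux M σ x [] l = ∑ l ∈ Dfin, likAux M σ x [] l := by
    intro x
    rw [hEdef, Finset.sum_image]
    · rw [Finset.sum_product]
      refine Finset.sum_congr rfl fun l hl => ?_
      obtain ⟨a, ha⟩ := Option.isSome_iff_exists.1 ((hDmem l).1 hl)
      have key : ∀ y : Y, likAux M σ x [] (l ++ [y]) = likAux M σ x [] l * M a x y := by
        intro y
        rw [likAux_append M σ x l [y] [], List.nil_append, likAux_singleton, ha]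
        rfl
      simp_rw [key]
      rw [← Finset.mul_sum, (hM a x).2, mul_one]
    · rintro ⟨t₁, y₁⟩ h₁ ⟨t₂, y₂⟩ h₂ h
      simp only at h
      have ht : t₁ = t₂ := by
        have := congrArg List.dropLast h
        rwa [List.dropLast_concat, List.dropLast_concat] at this
      subst ht
      have : [y₁] = [y₂] := List.append_cancel_left h
      simp_all
  -- the subset of E where σ is defined is Dfin minus the root
  have hEsplit : E.filter (fun l => (σ l).isSome) = Dfin.erase [] := by
    ext l
    simp only [Finset.mem_filter, Finset.mem_erase, hEmem, hDmem]
    constructor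
    · rintro ⟨⟨hne, _⟩, hs⟩; exact ⟨hne, hs⟩
    · rintro ⟨hne, hs⟩
      exact ⟨⟨hne, hpc _ _ (List.dropLast_prefix l) hs⟩, hs⟩
  -- the conditional distribution sums to 1 over E
  have hcond_sum : ∀ x, ∑ ys ∈ E, condDist M σ x ys = 1 := by
    intro x
    have h1 : ∑ ys ∈ E.filter (fun l => ¬ (σ l).isSome), likAux M σ x [] ys
        = ∑ ys ∈ E, condDist M σ x ys := by
      rw [Finset.sum_filter]
      refine Finset.sum_congr rfl fun ys hys => ?_
      obtain ⟨hne, hd⟩ := (hEmem ys).1 hys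
      by_cases h : σ ys = none
      · simp [condDist, hne, hd, h]
      · simp [condDist, hne, hd, h, Option.isSome_iff_ne_none]
    have h2 := Finset.sum_filter_add_sum_filter_not E (fun l => (σ l).isSome)
      (fun l => likAux M σ x [] l)
    rw [hEsplit] at h2
    have hroot' : ([] : List Y) ∈ Dfin := (hDmem _).2 hroot
    have h3 := Finset.add_sum_erase Dfin (fun l => likAux M σ x [] l) hroot'
    have hnil : likAux M σ x [] [] = 1 := rfl
    rw [← h1]
    have := hsum_lik x
    linarith
  have hcond_nonneg : ∀ x ys, 0 ≤ condDist M σ x ys := by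
    intro x ys
    unfold condDist
    split
    · exact likAux_nonneg M σ hMnn x ys []
    · exact le_rfl
  have hcond_zero : ∀ x ys, ys ∉ E → condDist M σ x ys = 0 := by
    intro x ys h
    unfold condDist
    rw [if_neg]
    rintro ⟨h1, h2, _⟩
    exact h ((hEmem ys).2 ⟨h1, h2⟩)
  have hjoint_nonneg : ∀ x ys, 0 ≤ joint M σ p x ys :=
    fun x ys => mul_nonneg (hp.1 x) (hcond_nonneg x ys)
  have hjoint_zero : ∀ x ys, ys ∉ E → joint M σ p x ys = 0 := by
    intro x ys h; unfold joint; rw [hcond_zero x ys h, mul_zero]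
  have hobs_nonneg : ∀ ys, 0 ≤ obsProb M σ p ys :=
    fun ys => Finset.sum_nonneg fun x _ => hjoint_nonneg x ys
  have hobs_zero : ∀ ys, ys ∉ E → obsProb M σ p ys = 0 := by
    intro ys h
    exact Finset.sum_eq_zero fun x _ => hjoint_zero x ys h
  have hmarg : ∀ x, ∑ ys ∈ E, joint M σ p x ys = p x := by
    intro x
    unfold joint
    rw [← Finset.mul_sum, hcond_sum x, mul_one]
  have hobs_sum : ∑ ys ∈ E, obsProb M σ p ys = 1 := by
    unfold obsProb
    rw [Finset.sum_comm]
    calc ∑ x : X, ∑ ys ∈ E, joint M σ p x ys = ∑ x : X, p x :=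
          Finset.sum_congr rfl fun x _ => hmarg x
      _ = 1 := hp.2
  have hjoint_of_obs : ∀ x ys, obsProb M σ p ys = 0 → joint M σ p x ys = 0 := by
    intro x ys h
    have := (Finset.sum_eq_zero_iff_of_nonneg
      (fun x _ => hjoint_nonneg x ys)).1 h
    exact this x (Finset.mem_univ x)
  set E' : Finset (List Y) := E.filter (fun ys => obsProb M σ p ys ≠ 0) with hE'def
  have hobs_pos : ∀ ys ∈ E', 0 < obsProb M σ p ys := by
    intro ys hys
    exact lt_of_le_of_ne (hobs_nonneg ys) (Ne.symm (Finset.mem_filter.1 hys).2)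
  have hpost_mem : ∀ ys ∈ E', post M σ p ys ∈ stdSimplex ℝ X := by
    intro ys hys
    have hpos := hobs_pos ys hys
    constructor
    · intro x
      exact div_nonneg (hjoint_nonneg x ys) hpos.le
    · show ∑ x : X, joint M σ p x ys / obsProb M σ p ys = 1
      rw [← Finset.sum_div]
      exact div_self hpos.ne'
  have hw_sum : ∑ ys ∈ E', obsProb M σ p ys = 1 := by
    rw [hE'def, Finset.sum_filter_ne_zero, hobs_sum]
  have hcombo : ∑ ys ∈ E', obsProb M σ p ys • post M σ p ys = p := by
    funext x
    rw [Finset.sum_apply]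
    have hterm : ∀ ys ∈ E', (obsProb M σ p ys • post M σ p ys) x = joint M σ p x ys := by
      intro ys hys
      have hpos := hobs_pos ys hys
      simp only [Pi.smul_apply, smul_eq_mul, post]
      field_simp
    rw [Finset.sum_congr rfl hterm]
    rw [Finset.sum_subset (Finset.filter_subset _ _)]
    · exact hmarg x
    · intro ys hys hys'
      apply hjoint_of_obs
      by_contra h
      exact hys' (Finset.mem_filter.2 ⟨hys, h⟩)
  have hcondU : condUncert U M σ p = ∑ ys ∈ E', obsProb M σ p ys * U (post M σ p ys) := by
    unfold condUncert
    rw [tsum_eq_sum (s := E) (fun ys hys => by rw [hobs_zero ys hys, zero_mul])]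
    rw [hE'def, eq_comm]
    apply Finset.sum_subset (Finset.filter_subset _ _)
    intro ys hys hys'
    have : obsProb M σ p ys = 0 := by
      by_contra h
      exact hys' (Finset.mem_filter.2 ⟨hys, h⟩)
    rw [this, zero_mul]
  have hjensen : ∑ ys ∈ E', obsProb M σ p ys * U (post M σ p ys) ≤ U p := by
    have := hU.1.le_map_sum (fun ys hys => (hobs_pos ys hys).le) hw_sum hpost_mem
    rw [hcombo] at this
    simpa using this
  constructor
  · unfold leak
    rw [hcondU]
    linarith
  · intro hindep
    have hmargX : ∀ x, margX M σ p x = p x := by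
      intro x
      unfold margX
      rw [tsum_eq_sum (s := E) (fun ys hys => hjoint_zero x ys hys)]
      exact hmarg x
    have hpost_eq : ∀ ys ∈ E', post M σ p ys = p := by
      intro ys hys
      funext x
      have hpos := hobs_pos ys hys
      show joint M σ p x ys / obsProb M σ p ys = p x
      rw [hindep x ys, hmargX x, mul_div_assoc, div_self hpos.ne', mul_one]
    unfold leak
    rw [hcondU, Finset.sum_congr rfl (fun ys hys => by rw [hpost_eq ys hys]),
      ← Finset.sum_mul, hw_sum, one_mul, sub_self]


end
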